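/- Let (A_n) be a sequence of symmetric real n×n matrices satisfying the mean-field assumption, with A_n(i,i) = 0 for all i and max_{i,j∈[n]} |A_n(i,j)| → 0 as n → ∞. Let Y be a random element of {1,…,q}^n with law μ_n, and let X and X̂ be as defined in the context. Then (1/n²)·E_{μ_n}[ Σ_{r=1}^q ( Σ_{i=1}^n (X_{ir} − X̂_{ir}) )² ] → 0 as n → ∞. -/

import Mathlib

open Finset Filter Real

noncomputable def pottsH {n q : ℕ} (A : Matrix (Fin n) (Fin n) ℝ)
    (J : Matrix (Fin q) (Fin q) ℝ) (h : Fin q → ℝ) (y : Fin n → Fin q) : ℝ :=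
  (1 / 2) * ∑ i, ∑ j, A i j * J (y i) (y j) + ∑ i, h (y i)

/-- The Potts probability mass function `μ_n(y) = exp(H(y)) / Σ_{y'} exp(H(y'))`. -/
noncomputable def pottsWeight {n q : ℕ} (A : Matrix (Fin n) (Fin n) ℝ)
    (J : Matrix (Fin q) (Fin q) ℝ) (h : Fin q → ℝ) (y : Fin n → Fin q) : ℝ :=
  Real.exp (pottsH A J h y) / ∑ y' : Fin n → Fin q, Real.exp (pottsH A J h y')

/-- The 0/1 encoding `x_{ir} = 1{y_i = r}` of a configuration. -/
noncomputable def xVec {n q : ℕ} (y : Fin n → Fin q) : Fin n → Fin q → ℝ :=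
  fun i r => if y i = r then 1 else 0

/-- `γ_{ir}(z) = Σ_s J(r,s) Σ_j A(i,j) z_{js}`. -/
noncomputable def gam {n q : ℕ} (A : Matrix (Fin n) (Fin n) ℝ)
    (J : Matrix (Fin q) (Fin q) ℝ) (z : Fin n → Fin q → ℝ) (i : Fin n) (r : Fin q) : ℝ :=
  ∑ s, J r s * ∑ j, A i j * z j s

/-- The conditional expectation vector `x̂`. -/
noncomputable def xHat {n q : ℕ} (A : Matrix (Fin n) (Fin n) ℝ)
    (J : Matrix (Fin q) (Fin q) ℝ) (h : Fin q → ℝ) (y : Fin n → Fin q)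
    (i : Fin n) (r : Fin q) : ℝ :=
  Real.exp (gam A J (xVec y) i r + h r) / ∑ s, Real.exp (gam A J (xVec y) i s + h s)

/-- The quadratic part of the Hamiltonian, as a function on `[0,1]^{n×q}`. -/
noncomputable def Fquad {n q : ℕ} (A : Matrix (Fin n) (Fin n) ℝ)
    (J : Matrix (Fin q) (Fin q) ℝ) (z : Fin n → Fin q → ℝ) : ℝ :=
  (1 / 2) * ∑ i, ∑ j, A i j * ∑ r, ∑ s, J r s * z i r * z j s

def meanFieldAssumption (A : (n : ℕ) → Matrix (Fin n) (Fin n) ℝ) : Prop :=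
  (∃ C : ℝ, ∀ n : ℕ, ∀ x : Fin n → ℝ, (∀ j, x j ∈ Set.Icc (0:ℝ) 1) →
      ∑ i, |∑ j, A n i j * x j| ≤ C * n) ∧
  Tendsto (fun n : ℕ => Matrix.trace (A n * A n) / n) atTop (nhds 0)

lemma gam_xVec {n q : ℕ} (A : Matrix (Fin n) (Fin n) ℝ) (J : Matrix (Fin q) (Fin q) ℝ)
    (y : Fin n → Fin q) (i : Fin n) (c : Fin q) :
    gam A J (xVec y) i c = ∑ j, A i j * J c (y j) := by
  unfold gam xVec
  simp only [Finset.mul_sum]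
  rw [Finset.sum_comm]
  refine Finset.sum_congr rfl fun j _ => ?_
  simp [mul_ite, Finset.sum_ite_eq, mul_comm]

lemma quad_split {n q : ℕ} (A : Matrix (Fin n) (Fin n) ℝ) (J : Matrix (Fin q) (Fin q) ℝ)
    (hA : A.IsSymm) (hJ : J.IsSymm) (i : Fin n) (hd : A i i = 0)
    (u y : Fin n → Fin q) (hu : ∀ j, j ≠ i → u j = y j) :
    ∑ j, ∑ k, A j k * J (u j) (u k)
      = (∑ j ∈ univ.erase i, ∑ k ∈ univ.erase i, A j k * J (y j) (y k))
        + 2 * ∑ k, A i k * J (u i) (y k) := by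
  rw [← Finset.add_sum_erase univ _ (mem_univ i)]
  have hrow : ∑ k, A i k * J (u i) (u k) = ∑ k, A i k * J (u i) (y k) := by
    refine Finset.sum_congr rfl fun k _ => ?_
    rcases eq_or_ne k i with rfl | hk
    · simp [hd]
    · rw [hu k hk]
  have hcols : ∀ j ∈ univ.erase i, ∑ k, A j k * J (u j) (u k)
      = (∑ k ∈ univ.erase i, A j k * J (y j) (y k)) + A i j * J (u i) (y j) := by
    intro j hj
    have hj' : j ≠ i := (Finset.mem_erase.mp hj).1
    rw [← Finset.add_sum_erase univ _ (mem_univ i)]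
    rw [add_comm]
    congr 1
    · refine Finset.sum_congr rfl fun k hk => ?_
      rw [hu j hj', hu k (Finset.mem_erase.mp hk).1]
    · rw [hu j hj', hA.apply i j, hJ.apply (u i) (y j)]
  rw [hrow, Finset.sum_congr rfl hcols, Finset.sum_add_distrib]
  have : ∑ j ∈ univ.erase i, A i j * J (u i) (y j) = ∑ k, A i k * J (u i) (y k) := by
    rw [← Finset.add_sum_erase univ _ (mem_univ i), hd]
    ring
  rw [this]; ring

lemma pottsH_update {n q : ℕ} (A : Matrix (Fin n) (Fin n) ℝ) (J : Matrix (Fin q) (Fin q) ℝ)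
    (h : Fin q → ℝ) (hA : A.IsSymm) (hJ : J.IsSymm) (i : Fin n) (hd : A i i = 0)
    (y : Fin n → Fin q) (c : Fin q) :
    pottsH A J h (Function.update y i c)
      = (pottsH A J h y - gam A J (xVec y) i (y i) - h (y i))
        + gam A J (xVec y) i c + h c := by
  unfold pottsH
  rw [quad_split A J hA hJ i hd (Function.update y i c) y
      (fun j hj => Function.update_of_ne hj c y),
    quad_split A J hA hJ i hd y y (fun j _ => rfl), gam_xVec, gam_xVec,
    Function.update_self]
  have h1 : ∑ j, h (Function.update y i c j) = h c + ∑ j ∈ univ.erase i, h (y j) := by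
    rw [← Finset.add_sum_erase univ _ (mem_univ i), Function.update_self]
    congr 1
    exact Finset.sum_congr rfl fun j hj => by
      rw [Function.update_of_ne (Finset.mem_erase.mp hj).1]
  have h2 : ∑ j, h (y j) = h (y i) + ∑ j ∈ univ.erase i, h (y j) :=
    (Finset.add_sum_erase univ _ (mem_univ i)).symm
  rw [h1, h2]; ring

lemma gam_update_self {n q : ℕ} (A : Matrix (Fin n) (Fin n) ℝ) (J : Matrix (Fin q) (Fin q) ℝ)
    (i : Fin n) (hd : A i i = 0) (y : Fin n → Fin q) (c s : Fin q) :
    gam A J (xVec (Function.update y i c)) i s = gam A J (xVec y) i s := by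
  rw [gam_xVec, gam_xVec]
  refine Finset.sum_congr rfl fun j _ => ?_
  rcases eq_or_ne j i with rfl | hj
  · simp [hd]
  · rw [Function.update_of_ne hj]

lemma orth {n q : ℕ} (hq0 : 0 < q) (A : Matrix (Fin n) (Fin n) ℝ)
    (J : Matrix (Fin q) (Fin q) ℝ) (h : Fin q → ℝ) (hA : A.IsSymm) (hJ : J.IsSymm)
    (i : Fin n) (hd : A i i = 0) (r : Fin q) (g : (Fin n → Fin q) → ℝ)
    (hg : ∀ y c, g (Function.update y i c) = g y) :
    ∑ y : Fin n → Fin q, Real.exp (pottsH A J h y)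
      * ((xVec y i r - xHat A J h y i r) * g y) = 0 := by
  set F : (Fin n → Fin q) → ℝ := fun y =>
    Real.exp (pottsH A J h y) * ((xVec y i r - xHat A J h y i r) * g y) with hF
  have e := Equiv.funSplitAt i (Fin q)
  rw [← Equiv.sum_comp (Equiv.funSplitAt i (Fin q)).symm F, Fintype.sum_prod_type,
    Finset.sum_comm]
  refine Finset.sum_eq_zero fun w _ => ?_
  set b : Fin n → Fin q := (Equiv.funSplitAt i (Fin q)).symm (⟨0, hq0⟩, w) with hb
  have hbc : ∀ c, (Equiv.funSplitAt i (Fin q)).symm (c, w) = Function.update b i c := by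
    intro c; funext j
    rcases eq_or_ne j i with rfl | hj
    · simp
    · simp [hb, hj, Function.update_of_ne hj]
  set γ : Fin q → ℝ := fun s => gam A J (xVec b) i s with hγ
  set S : ℝ := ∑ s, Real.exp (γ s + h s) with hS
  have hSpos : 0 < S := Finset.sum_pos (fun s _ => Real.exp_pos _)
    ⟨⟨0, hq0⟩, mem_univ _⟩
  have key : ∀ c, F (Function.update b i c)
      = (g b * Real.exp (pottsH A J h b - γ (b i) - h (b i)))
        * (Real.exp (γ c + h c) * ((if c = r then 1 else 0) - Real.exp (γ r + h r) / S)) := by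
    intro c
    have hgam : ∀ s, gam A J (xVec (Function.update b i c)) i s = γ s :=
      fun s => gam_update_self A J i hd b c s
    have hxhat : xHat A J h (Function.update b i c) i r = Real.exp (γ r + h r) / S := by
      unfold xHat; simp only [hgam]; rfl
    have hxv : xVec (Function.update b i c) i r = if c = r then 1 else 0 := by
      simp [xVec]
    rw [hF]
    simp only [hxhat, hxv, hg b c, pottsH_update A J h hA hJ i hd b c, hgam]
    rw [show pottsH A J h b - gam A J (xVec b) i (b i) - h (b i) + gam A J (xVec b) i c + h c
        = (pottsH A J h b - γ (b i) - h (b i)) + (γ c + h c) from by simp only [hγ]; ring,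
      Real.exp_add]
    ring
  simp only [hbc, key]
  rw [← Finset.mul_sum]
  have : ∑ c, Real.exp (γ c + h c) * ((if c = r then 1 else 0) - Real.exp (γ r + h r) / S)
      = 0 := by
    simp only [mul_sub, Finset.sum_sub_distrib, mul_ite, mul_one, mul_zero,
      Finset.sum_ite_eq', mem_univ, if_true, ← Finset.sum_mul, ← hS]
    field_simp
    ring
  rw [this, mul_zero]

lemma softmax_nonneg {q : ℕ} (a : Fin q → ℝ) (r : Fin q) :
    0 ≤ Real.exp (a r) / ∑ s, Real.exp (a s) :=
  div_nonneg (Real.exp_pos _).le (Finset.sum_nonneg fun s _ => (Real.exp_pos _).le)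

lemma softmax_le_one {q : ℕ} (a : Fin q → ℝ) (r : Fin q) :
    Real.exp (a r) / ∑ s, Real.exp (a s) ≤ 1 := by
  have hS : 0 < ∑ s, Real.exp (a s) :=
    Finset.sum_pos' (fun s _ => (Real.exp_pos _).le) ⟨r, mem_univ r, Real.exp_pos _⟩
  rw [div_le_one hS]
  exact Finset.single_le_sum (fun s _ => (Real.exp_pos _).le) (mem_univ r)

lemma softmax_pert {q : ℕ} (hq0 : 0 < q) (a b : Fin q → ℝ) (δ : ℝ) (hδ : 0 ≤ δ)
    (hab : ∀ s, |a s - b s| ≤ δ) (r : Fin q) :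
    |Real.exp (a r) / ∑ s, Real.exp (a s) - Real.exp (b r) / ∑ s, Real.exp (b s)|
      ≤ Real.exp (2 * δ) - 1 := by
  have hSa : 0 < ∑ s, Real.exp (a s) :=
    Finset.sum_pos (fun s _ => Real.exp_pos _) ⟨⟨0, hq0⟩, mem_univ _⟩
  have hSb : 0 < ∑ s, Real.exp (b s) :=
    Finset.sum_pos (fun s _ => Real.exp_pos _) ⟨⟨0, hq0⟩, mem_univ _⟩
  have key : ∀ (u v : Fin q → ℝ), (∀ s, |u s - v s| ≤ δ) →
      Real.exp (v r) / ∑ s, Real.exp (v s)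
        - Real.exp (u r) / ∑ s, Real.exp (u s) ≤ Real.exp (2 * δ) - 1 := by
    intro u v huv
    have hSu : 0 < ∑ s, Real.exp (u s) :=
      Finset.sum_pos (fun s _ => Real.exp_pos _) ⟨⟨0, hq0⟩, mem_univ _⟩
    have hSv : 0 < ∑ s, Real.exp (v s) :=
      Finset.sum_pos (fun s _ => Real.exp_pos _) ⟨⟨0, hq0⟩, mem_univ _⟩
    have h1 : Real.exp (v r) ≤ Real.exp δ * Real.exp (u r) := by
      rw [← Real.exp_add]
      exact Real.exp_le_exp.mpr (by have := (abs_le.mp (huv r)).1; linarith)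
    have h2 : Real.exp (-δ) * ∑ s, Real.exp (u s) ≤ ∑ s, Real.exp (v s) := by
      rw [Finset.mul_sum]
      refine Finset.sum_le_sum fun s _ => ?_
      rw [← Real.exp_add]
      exact Real.exp_le_exp.mpr (by have := (abs_le.mp (huv s)).2; linarith)
    have h3 : Real.exp (v r) / ∑ s, Real.exp (v s)
        ≤ Real.exp (2 * δ) * (Real.exp (u r) / ∑ s, Real.exp (u s)) := by
      have hden : 0 < Real.exp (-δ) * ∑ s, Real.exp (u s) :=
        mul_pos (Real.exp_pos _) hSu
      calc Real.exp (v r) / ∑ s, Real.exp (v s)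
          ≤ (Real.exp δ * Real.exp (u r)) / (Real.exp (-δ) * ∑ s, Real.exp (u s)) := by
            apply div_le_div₀ (by positivity) h1 hden h2
        _ = Real.exp (2 * δ) * (Real.exp (u r) / ∑ s, Real.exp (u s)) := by
            rw [mul_div_mul_comm, ← Real.exp_sub, show δ - -δ = 2*δ by ring]
    have hp1 : Real.exp (u r) / ∑ s, Real.exp (u s) ≤ 1 := softmax_le_one u r
    have hp0 : 0 ≤ Real.exp (u r) / ∑ s, Real.exp (u s) := softmax_nonneg u r
    have hE : (1:ℝ) ≤ Real.exp (2 * δ) :=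
      Real.one_le_exp (by linarith)
    nlinarith
  rw [abs_sub_le_iff]
  constructor
  · exact key b a (fun s => by rw [abs_sub_comm]; exact hab s)
  · exact key a b hab

lemma xHat_mem {n q : ℕ} (A : Matrix (Fin n) (Fin n) ℝ) (J : Matrix (Fin q) (Fin q) ℝ)
    (h : Fin q → ℝ) (y : Fin n → Fin q) (i : Fin n) (r : Fin q) :
    xHat A J h y i r ∈ Set.Icc (0:ℝ) 1 :=
  ⟨softmax_nonneg (fun s => gam A J (xVec y) i s + h s) r,
   softmax_le_one (fun s => gam A J (xVec y) i s + h s) r⟩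

lemma delta_abs_le_one {n q : ℕ} (A : Matrix (Fin n) (Fin n) ℝ) (J : Matrix (Fin q) (Fin q) ℝ)
    (h : Fin q → ℝ) (y : Fin n → Fin q) (i : Fin n) (r : Fin q) :
    |xVec y i r - xHat A J h y i r| ≤ 1 := by
  have h1 := (xHat_mem A J h y i r).1
  have h2 := (xHat_mem A J h y i r).2
  have : xVec y i r = 0 ∨ xVec y i r = 1 := by unfold xVec; split <;> simp
  rw [abs_le]; rcases this with h3 | h3 <;> rw [h3] <;> constructor <;> linarith

lemma gam_zeroed_diff {n q : ℕ} (A : Matrix (Fin n) (Fin n) ℝ) (J : Matrix (Fin q) (Fin q) ℝ)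
    (y : Fin n → Fin q) (i j : Fin n) (s : Fin q) :
    gam A J (xVec y) j s - gam A J (Function.update (xVec y) i (fun _ => 0)) j s
      = A j i * J s (y i) := by
  unfold gam
  rw [← Finset.sum_sub_distrib]
  have : ∀ s' : Fin q, J s s' * (∑ k, A j k * xVec y k s')
      - J s s' * (∑ k, A j k * Function.update (xVec y) i (fun _ => 0) k s')
      = A j i * (J s s' * xVec y i s') := by
    intro s'
    rw [← mul_sub, ← Finset.sum_sub_distrib]
    have : ∑ k, (A j k * xVec y k s'
        - A j k * Function.update (xVec y) i (fun _ => 0) k s')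
        = A j i * xVec y i s' := by
      rw [Finset.sum_eq_single i]
      · simp
      · intro k _ hk; rw [Function.update_of_ne hk]; ring
      · intro hk; exact absurd (mem_univ i) hk
    rw [this]; ring
  rw [Finset.sum_congr rfl fun s' _ => this s', ← Finset.mul_sum]
  congr 1
  simp [xVec, mul_ite, Finset.sum_ite_eq, mul_comm]

lemma zeroed_update {n q : ℕ} (y : Fin n → Fin q) (i : Fin n) (c : Fin q) :
    Function.update (xVec (Function.update y i c)) i (fun _ => (0:ℝ))
      = Function.update (xVec y) i (fun _ => 0) := by
  funext k
  rcases eq_or_ne k i with rfl | hk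
  · simp
  · rw [Function.update_of_ne hk, Function.update_of_ne hk]
    funext s; unfold xVec; rw [Function.update_of_ne hk]

lemma weight_nonneg {n q : ℕ} (A : Matrix (Fin n) (Fin n) ℝ) (J : Matrix (Fin q) (Fin q) ℝ)
    (h : Fin q → ℝ) (y : Fin n → Fin q) : 0 ≤ pottsWeight A J h y :=
  div_nonneg (Real.exp_pos _).le (Finset.sum_nonneg fun _ _ => (Real.exp_pos _).le)

lemma weight_sum_one {n q : ℕ} (hq0 : 0 < q) (A : Matrix (Fin n) (Fin n) ℝ)
    (J : Matrix (Fin q) (Fin q) ℝ) (h : Fin q → ℝ) :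
    ∑ y : Fin n → Fin q, pottsWeight A J h y = 1 := by
  have : Nonempty (Fin q) := ⟨⟨0, hq0⟩⟩
  have hZ : 0 < ∑ y' : Fin n → Fin q, Real.exp (pottsH A J h y') :=
    Finset.sum_pos (fun _ _ => Real.exp_pos _) univ_nonempty
  unfold pottsWeight
  rw [← Finset.sum_div, div_self hZ.ne']

lemma pair_bound {n q : ℕ} (hq0 : 0 < q) (A : Matrix (Fin n) (Fin n) ℝ)
    (J : Matrix (Fin q) (Fin q) ℝ) (h : Fin q → ℝ) (hA : A.IsSymm) (hJ : J.IsSymm)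
    (hd : ∀ i, A i i = 0) (MJ ε : ℝ) (hMJ : ∀ r s, |J r s| ≤ MJ) (hAb : ∀ i j, |A i j| ≤ ε)
    (r : Fin q) (i j : Fin n) (hij : j ≠ i) :
    ∑ y : Fin n → Fin q, pottsWeight A J h y
      * ((xVec y i r - xHat A J h y i r) * (xVec y j r - xHat A J h y j r))
      ≤ Real.exp (2 * (MJ * ε)) - 1 := by
  have hMJ0 : 0 ≤ MJ := le_trans (abs_nonneg _) (hMJ r r)
  have hε0 : 0 ≤ ε := le_trans (abs_nonneg _) (hAb i i)
  have hδ0 : 0 ≤ MJ * ε := mul_nonneg hMJ0 hε0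
  have : Nonempty (Fin q) := ⟨⟨0, hq0⟩⟩
  have hZ : 0 < ∑ y' : Fin n → Fin q, Real.exp (pottsH A J h y') :=
    Finset.sum_pos (fun _ _ => Real.exp_pos _) univ_nonempty
  -- ghost conditional expectation ignoring site i
  set G : (Fin n → Fin q) → ℝ := fun y =>
    Real.exp (gam A J (Function.update (xVec y) i (fun _ => 0)) j r + h r)
      / ∑ s, Real.exp (gam A J (Function.update (xVec y) i (fun _ => 0)) j s + h s) with hG
  set g : (Fin n → Fin q) → ℝ := fun y => xVec y j r - G y with hg
  have hginv : ∀ y c, g (Function.update y i c) = g y := by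
    intro y c
    have h1 : xVec (Function.update y i c) j r = xVec y j r := by
      unfold xVec; rw [Function.update_of_ne hij]
    have h2 : G (Function.update y i c) = G y := by
      rw [hG]; simp only [zeroed_update]
    rw [hg]; simp only [h1, h2]
  have horth : ∑ y : Fin n → Fin q, pottsWeight A J h y
      * ((xVec y i r - xHat A J h y i r) * g y) = 0 := by
    unfold pottsWeight
    have := orth hq0 A J h hA hJ i (hd i) r g hginv
    calc ∑ y : Fin n → Fin q, Real.exp (pottsH A J h y)
          / (∑ y' : Fin n → Fin q, Real.exp (pottsH A J h y'))
          * ((xVec y i r - xHat A J h y i r) * g y)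
        = (∑ y : Fin n → Fin q, Real.exp (pottsH A J h y)
            * ((xVec y i r - xHat A J h y i r) * g y))
            / (∑ y' : Fin n → Fin q, Real.exp (pottsH A J h y')) := by
          rw [Finset.sum_div]
          exact Finset.sum_congr rfl fun y _ => by ring
      _ = 0 := by rw [this, zero_div]
  have hGdiff : ∀ y : Fin n → Fin q,
      |G y - xHat A J h y j r| ≤ Real.exp (2 * (MJ * ε)) - 1 := by
    intro y
    have := softmax_pert hq0
      (fun s => gam A J (Function.update (xVec y) i (fun _ => 0)) j s + h s)
      (fun s => gam A J (xVec y) j s + h s) (MJ * ε) hδ0 ?_ r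
    · exact this
    · intro s
      have : gam A J (Function.update (xVec y) i (fun _ => 0)) j s + h s
          - (gam A J (xVec y) j s + h s) = -(A j i * J s (y i)) := by
        have := gam_zeroed_diff A J y i j s
        linarith
      rw [this, abs_neg, abs_mul]
      calc |A j i| * |J s (y i)| ≤ ε * MJ :=
        mul_le_mul (hAb j i) (hMJ s (y i)) (abs_nonneg _) hε0
      _ = MJ * ε := mul_comm _ _
  have split : ∀ y : Fin n → Fin q,
      pottsWeight A J h y
        * ((xVec y i r - xHat A J h y i r) * (xVec y j r - xHat A J h y j r))
      = pottsWeight A J h y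
          * ((xVec y i r - xHat A J h y i r) * (G y - xHat A J h y j r))
        + pottsWeight A J h y * ((xVec y i r - xHat A J h y i r) * g y) := by
    intro y; rw [hg]; ring
  rw [Finset.sum_congr rfl fun y _ => split y, Finset.sum_add_distrib, horth, add_zero]
  calc ∑ y : Fin n → Fin q, pottsWeight A J h y
        * ((xVec y i r - xHat A J h y i r) * (G y - xHat A J h y j r))
      ≤ ∑ y : Fin n → Fin q, pottsWeight A J h y * (Real.exp (2 * (MJ * ε)) - 1) := by
        refine Finset.sum_le_sum fun y _ => ?_
        refine mul_le_mul_of_nonneg_left ?_ (weight_nonneg A J h y)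
        calc (xVec y i r - xHat A J h y i r) * (G y - xHat A J h y j r)
            ≤ |(xVec y i r - xHat A J h y i r) * (G y - xHat A J h y j r)| := le_abs_self _
          _ = |xVec y i r - xHat A J h y i r| * |G y - xHat A J h y j r| := abs_mul _ _
          _ ≤ 1 * (Real.exp (2 * (MJ * ε)) - 1) :=
              mul_le_mul (delta_abs_le_one A J h y i r) (hGdiff y) (abs_nonneg _) zero_le_one
          _ = Real.exp (2 * (MJ * ε)) - 1 := one_mul _
    _ = Real.exp (2 * (MJ * ε)) - 1 := by
        rw [← Finset.sum_mul, weight_sum_one hq0, one_mul]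

lemma total_bound {n q : ℕ} (hq0 : 0 < q) (A : Matrix (Fin n) (Fin n) ℝ)
    (J : Matrix (Fin q) (Fin q) ℝ) (h : Fin q → ℝ) (hA : A.IsSymm) (hJ : J.IsSymm)
    (hd : ∀ i, A i i = 0) (MJ ε : ℝ) (hε0 : 0 ≤ ε)
    (hMJ : ∀ r s, |J r s| ≤ MJ) (hAb : ∀ i j, |A i j| ≤ ε) :
    ∑ y : Fin n → Fin q, pottsWeight A J h y *
        ∑ r, (∑ i, (xVec y i r - xHat A J h y i r)) ^ 2
      ≤ q * n + q * n ^ 2 * (Real.exp (2 * (MJ * ε)) - 1) := by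
  have hMJ0 : 0 ≤ MJ := le_trans (abs_nonneg _) (hMJ ⟨0, hq0⟩ ⟨0, hq0⟩)
  have hE0 : 0 ≤ Real.exp (2 * (MJ * ε)) - 1 := by
    have : (1:ℝ) ≤ Real.exp (2 * (MJ * ε)) :=
      Real.one_le_exp (by positivity)
    linarith
  have expand : ∑ y : Fin n → Fin q, pottsWeight A J h y *
        ∑ r, (∑ i, (xVec y i r - xHat A J h y i r)) ^ 2
      = ∑ r, ∑ i, ∑ j, ∑ y : Fin n → Fin q, pottsWeight A J h y *
          ((xVec y i r - xHat A J h y i r) * (xVec y j r - xHat A J h y j r)) := by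
    have expand1 : ∀ y : Fin n → Fin q, pottsWeight A J h y *
        ∑ r, (∑ i, (xVec y i r - xHat A J h y i r)) ^ 2
        = ∑ r, ∑ i, ∑ j, pottsWeight A J h y *
            ((xVec y i r - xHat A J h y i r) * (xVec y j r - xHat A J h y j r)) := by
      intro y
      rw [Finset.mul_sum]
      refine Finset.sum_congr rfl fun r _ => ?_
      rw [pow_two, Finset.sum_mul_sum, Finset.mul_sum]
      exact Finset.sum_congr rfl fun i _ => Finset.mul_sum _ _ _
    rw [Finset.sum_congr rfl fun y _ => expand1 y, Finset.sum_comm]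
    refine Finset.sum_congr rfl fun r _ => ?_
    rw [Finset.sum_comm]
    exact Finset.sum_congr rfl fun i _ => Finset.sum_comm
  rw [expand]
  have hdiag : ∀ (r : Fin q) (i : Fin n),
      ∑ y : Fin n → Fin q, pottsWeight A J h y *
        ((xVec y i r - xHat A J h y i r) * (xVec y i r - xHat A J h y i r)) ≤ 1 := by
    intro r i
    calc ∑ y : Fin n → Fin q, pottsWeight A J h y *
          ((xVec y i r - xHat A J h y i r) * (xVec y i r - xHat A J h y i r))
        ≤ ∑ y : Fin n → Fin q, pottsWeight A J h y * 1 := by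
          refine Finset.sum_le_sum fun y _ => ?_
          refine mul_le_mul_of_nonneg_left ?_ (weight_nonneg A J h y)
          calc (xVec y i r - xHat A J h y i r) * (xVec y i r - xHat A J h y i r)
              = |xVec y i r - xHat A J h y i r| * |xVec y i r - xHat A J h y i r| :=
                (abs_mul_abs_self _).symm
            _ ≤ 1 * 1 := mul_le_mul (delta_abs_le_one A J h y i r)
                (delta_abs_le_one A J h y i r) (abs_nonneg _) zero_le_one
            _ = 1 := one_mul _
      _ = 1 := by rw [← Finset.sum_mul, weight_sum_one hq0, one_mul]
  calc ∑ r, ∑ i, ∑ j, ∑ y : Fin n → Fin q, pottsWeight A J h y *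
        ((xVec y i r - xHat A J h y i r) * (xVec y j r - xHat A J h y j r))
      ≤ ∑ r : Fin q, ∑ i : Fin n, ∑ j : Fin n,
          ((if i = j then (1:ℝ) else 0) + (Real.exp (2 * (MJ * ε)) - 1)) := by
        refine Finset.sum_le_sum fun r _ => Finset.sum_le_sum fun i _ =>
          Finset.sum_le_sum fun j _ => ?_
        rcases eq_or_ne i j with rfl | hij
        · rw [if_pos rfl]; have := hdiag r i; linarith
        · have := pair_bound hq0 A J h hA hJ hd MJ ε hMJ hAb r i j (Ne.symm hij)
          simp only [if_neg hij, zero_add]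
          exact this
    _ = q * (n * 1 + n * (n * (Real.exp (2 * (MJ * ε)) - 1))) := by
        simp [Finset.sum_add_distrib, Finset.sum_ite_eq, Finset.mul_sum]
        ring
    _ ≤ q * n + q * n ^ 2 * (Real.exp (2 * (MJ * ε)) - 1) := by
        have hn : (0:ℝ) ≤ n := Nat.cast_nonneg n
        nlinarith [hE0, hn]

theorem lemma_sum_close
    (q : ℕ) (hq : 2 ≤ q) (J : Matrix (Fin q) (Fin q) ℝ) (hJ : J.IsSymm) (h : Fin q → ℝ)
    (A : (n : ℕ) → Matrix (Fin n) (Fin n) ℝ) (hsymm : ∀ n, (A n).IsSymm)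
    (hMF : meanFieldAssumption A)
    (hdiag : ∀ n : ℕ, ∀ i : Fin n, A n i i = 0)
    (hmax : Tendsto (fun n : ℕ => ⨆ i : Fin n, ⨆ j : Fin n, |A n i j|) atTop (nhds 0)) :
    Tendsto
      (fun n : ℕ =>
        (∑ y : Fin n → Fin q, pottsWeight (A n) J h y *
          ∑ r, (∑ i, (xVec y i r - xHat (A n) J h y i r)) ^ 2) / (n : ℝ) ^ 2)
      atTop (nhds 0) := by
  have hq0 : 0 < q := by omega
  set MJ : ℝ := ∑ r : Fin q, ∑ s : Fin q, |J r s| with hMJdef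
  have hMJ : ∀ r s, |J r s| ≤ MJ := by
    intro r s
    calc |J r s| ≤ ∑ s', |J r s'| :=
        Finset.single_le_sum (f := fun s' => |J r s'|)
          (fun s' _ => abs_nonneg _) (Finset.mem_univ s)
      _ ≤ MJ := Finset.single_le_sum
          (f := fun r' => ∑ s', |J r' s'|)
          (fun r' _ => Finset.sum_nonneg fun s' _ => abs_nonneg _) (Finset.mem_univ r)
  set ε : ℕ → ℝ := fun n => ⨆ i : Fin n, ⨆ j : Fin n, |A n i j| with hεdef
  have hεb : ∀ (n : ℕ) (i j : Fin n), |A n i j| ≤ ε n := by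
    intro n i j
    calc |A n i j| ≤ ⨆ j' : Fin n, |A n i j'| :=
        le_ciSup (f := fun j' : Fin n => |A n i j'|)
          (Set.Finite.bddAbove (Set.finite_range _)) j
      _ ≤ ε n := le_ciSup (f := fun i' : Fin n => ⨆ j' : Fin n, |A n i' j'|)
          (Set.Finite.bddAbove (Set.finite_range _)) i
  set b : ℕ → ℝ := fun n =>
    (q : ℝ) * (n : ℝ)⁻¹ + q * (Real.exp (2 * (MJ * ε n)) - 1) with hbdef
  have hlow : ∀ n : ℕ,
      0 ≤ (∑ y : Fin n → Fin q, pottsWeight (A n) J h y *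
          ∑ r, (∑ i, (xVec y i r - xHat (A n) J h y i r)) ^ 2) / (n : ℝ) ^ 2 := by
    intro n
    apply div_nonneg _ (sq_nonneg _)
    exact Finset.sum_nonneg fun y _ => mul_nonneg (weight_nonneg _ _ _ _)
      (Finset.sum_nonneg fun r _ => sq_nonneg _)
  have hup : ∀ n : ℕ, 1 ≤ n →
      (∑ y : Fin n → Fin q, pottsWeight (A n) J h y *
          ∑ r, (∑ i, (xVec y i r - xHat (A n) J h y i r)) ^ 2) / (n : ℝ) ^ 2 ≤ b n := by
    intro n hn
    have hn0 : (0:ℝ) < n := by exact_mod_cast hn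
    have hε0 : 0 ≤ ε n := le_trans (abs_nonneg _) (hεb n ⟨0, hn⟩ ⟨0, hn⟩)
    have htb := total_bound hq0 (A n) J h (hsymm n) hJ (hdiag n) MJ (ε n) hε0 hMJ (hεb n)
    calc (∑ y : Fin n → Fin q, pottsWeight (A n) J h y *
          ∑ r, (∑ i, (xVec y i r - xHat (A n) J h y i r)) ^ 2) / (n : ℝ) ^ 2
        ≤ ((q : ℝ) * n + q * (n:ℝ) ^ 2 * (Real.exp (2 * (MJ * ε n)) - 1)) / (n : ℝ) ^ 2 :=
          div_le_div_of_nonneg_right htb (by positivity) |>.trans_eq rfl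
      _ = b n := by
          rw [hbdef]
          field_simp
  have hb0 : Filter.Tendsto b Filter.atTop (nhds 0) := by
    have h1 : Filter.Tendsto (fun n : ℕ => (q : ℝ) * (n : ℝ)⁻¹) Filter.atTop (nhds 0) := by
      have := (tendsto_inv_atTop_zero (𝕜 := ℝ)).comp
        (tendsto_natCast_atTop_atTop (R := ℝ))
      simpa using this.const_mul (q : ℝ)
    have h2 : Filter.Tendsto (fun n : ℕ => (q : ℝ) * (Real.exp (2 * (MJ * ε n)) - 1))
        Filter.atTop (nhds 0) := by
      have hcont : Continuous (fun t : ℝ => (q : ℝ) * (Real.exp (2 * (MJ * t)) - 1)) := by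
        fun_prop
      have := (hcont.tendsto 0).comp hmax
      simp at this; exact this
    simpa using h1.add h2
  refine tendsto_of_tendsto_of_tendsto_of_le_of_le' tendsto_const_nhds hb0
    (Filter.Eventually.of_forall hlow) ?_
  filter_upwards [Filter.eventually_ge_atTop 1] with n hn using hup n hn
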